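/- For all natural numbers m ≥ 1 and n ≥ 1, B_{m+n} > B_m * B_n, where B is the balancing sequence. -/
import Mathlib


def B : ℕ → ℕ
  | 0 => 0
  | 1 => 1
  | (n + 2) => 6 * B (n + 1) - B n

lemma B_rec (n : ℕ) : B (n + 2) = 6 * B (n + 1) - B n := rfl

lemma B_mono : ∀ n, B n < B (n + 1) := by
  intro n
  induction n with
  | zero => simp [B]
  | succ n ih =>
    have h : B (n + 1 + 1) = 6 * B (n + 1) - B n := B_rec n
    omega

lemma B_recz (n : ℕ) : (B (n + 2) : ℤ) = 6 * B (n + 1) - B n := by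
  have h := B_rec n
  have hm := (B_mono n).le
  omega

lemma B_add (n m : ℕ) :
    (B (m + n + 1) : ℤ) = B (m + 1) * B (n + 1) - B m * B n := by
  induction n generalizing m with
  | zero => simp [B]
  | succ n ih =>
    have h1 := ih (m + 1)
    have h2 := B_recz m
    have h3 := B_recz n
    have e1 : m + 1 + n + 1 = m + (n + 1) + 1 := by ring
    have e2 : m + 1 + 1 = m + 2 := by ring
    have e3 : n + 1 + 1 = n + 2 := by ring
    rw [e1] at h1
    rw [h1, e2, e3, h2, h3]; ring

lemma B_pos : ∀ n, 0 < B (n + 1) := by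
  intro n
  induction n with
  | zero => simp [B]
  | succ n ih => have := B_mono (n + 1); omega

theorem stmt9 : ∀ m n : ℕ, 1 ≤ m → 1 ≤ n → B m * B n < B (m + n) := by
  intro m n hm hn
  obtain ⟨a, rfl⟩ := Nat.exists_eq_add_of_le hm
  obtain ⟨b, rfl⟩ := Nat.exists_eq_add_of_le hn
  rw [Nat.add_comm 1 a, Nat.add_comm 1 b]
  have key := B_add b (a + 1)
  have e : a + 1 + b + 1 = a + 1 + (b + 1) := by ring
  rw [e] at key
  have e2 : a + 1 + 1 = a + 2 := by ring
  rw [e2] at key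
  have hrec := B_recz a
  have hma : (B a : ℤ) ≤ B (a + 1) := by exact_mod_cast (B_mono a).le
  have h5 : (5 : ℤ) * B (a + 1) ≤ B (a + 2) := by linarith
  have hmono2 : (B b : ℤ) + 1 ≤ B (b + 1) := by
    have := B_mono b; exact_mod_cast this
  have hX : (1 : ℤ) ≤ B (a + 1) := by exact_mod_cast B_pos a
  have hb0 : (0 : ℤ) ≤ B b := by positivity
  have hv0 : (0 : ℤ) ≤ B (b + 1) := by positivity
  have goal : (B (a + 1) : ℤ) * B (b + 1) < B (a + 1 + (b + 1)) := by
    rw [key]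
    nlinarith [mul_le_mul_of_nonneg_right h5 hv0,
      mul_le_mul_of_nonneg_left hmono2 (by linarith : (0:ℤ) ≤ (B (a + 1) : ℤ))]
  exact_mod_cast goal
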